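/- Let π = (s, s−1, ..., 1, s+r, ..., s+1) ∈ S_{s+r} with s ≥ r ≥ 1, and let Δ < r. Let μ and ν be partitions with |μ| + |ν| = Δ, ℓ(μ) ≤ s, μ_1 < r, ℓ(ν) ≤ s, ν_1 < r. Then the set of values of π moved (not fixed) by the inner jump action of μ is disjoint from the set of values moved by the outer jump action of ν. -/

import Mathlib

lemma aux_len_le_sum (l : List ℕ) (h : ∀ x ∈ l, 0 < x) : l.length ≤ l.sum := by
  induction l with
  | nil => simp
  | cons a t ih =>
    simp only [List.length_cons, List.sum_cons]
    have ha := h a (by simp)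
    have := ih (fun x hx => h x (by simp [hx]))
    omega

lemma aux_head_le_sum (l : List ℕ) : l.headD 0 ≤ l.sum := by
  cases l with
  | nil => simp
  | cons a t => simp [List.headD]

/-- Lemma 3.2: with the partitions `μ, ν` written as weakly
decreasing lists of positive integers, the values of the minimal permutation
`(s, …, 1, s+r, …, s+1)` moved by the inner jump action of `μ`, namely
`{1, …, ℓ(μ)} ∪ {s+r-μ₁+1, …, s+r}`, are disjoint from the values moved by
the outer jump action of `ν`, namely `{s-ℓ(ν)+1, …, s+ν₁}`. -/
theorem stmt_9 (s r Δ : ℕ) (hr : 1 ≤ r) (hrs : r ≤ s) (hΔ : Δ < r)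
    (μ ν : List ℕ)
    (hμsort : μ.Pairwise (· ≥ ·)) (hμpos : ∀ x ∈ μ, 0 < x)
    (hνsort : ν.Pairwise (· ≥ ·)) (hνpos : ∀ x ∈ ν, 0 < x)
    (hsum : μ.sum + ν.sum = Δ)
    (hμlen : μ.length ≤ s) (hμ1 : μ.headD 0 < r)
    (hνlen : ν.length ≤ s) (hν1 : ν.headD 0 < r) :
    Disjoint
      (Finset.Icc 1 μ.length ∪ Finset.Icc (s + r - μ.headD 0 + 1) (s + r))
      (Finset.Icc (s - ν.length + 1) (s + ν.headD 0)) := by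
  have h1 := aux_len_le_sum μ hμpos
  have h2 := aux_len_le_sum ν hνpos
  have h3 := aux_head_le_sum μ
  have h4 := aux_head_le_sum ν
  rw [Finset.disjoint_left]
  intro n hn hn'
  simp only [Finset.mem_union, Finset.mem_Icc] at hn hn'
  omega
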